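/- Let C be a counter machine and ℂ the Σ_C-Nmatrix induced by C. Then C halts when all counters are initially set to zero (i.e. comp(C, 0⃗) is finite) if and only if Thm(Σ_C, ⊢_ℂ) ≠ ∅. -/

import Mathlib

structure Signature where
  Conn : Type
  arity : Conn → ℕ

inductive Fm (S : Signature) : Type where
  | var : ℕ → Fm S
  | app : (c : S.Conn) → (Fin (S.arity c) → Fm S) → Fm S

def Fm.subst {S : Signature} (σ : ℕ → Fm S) : Fm S → Fm S
  | .var i => σ i
  | .app c args => .app c (fun j => (args j).subst σ)

def Fm.varsLT {S : Signature} (n : ℕ) : Fm S → Prop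
  | .var i => i < n
  | .app _ args => ∀ j, (args j).varsLT n

structure NMatrix (S : Signature) (V : Type) where
  D : Set V
  interp : (c : S.Conn) → (Fin (S.arity c) → V) → Set V
  interp_nonempty : ∀ c args, (interp c args).Nonempty

def IsVal {S : Signature} {V : Type} (M : NMatrix S V) (v : Fm S → V) : Prop :=
  ∀ (c : S.Conn) (args : Fin (S.arity c) → Fm S),
    v (Fm.app c args) ∈ M.interp c (fun i => v (args i))

def Entails {S : Signature} {V : Type} (M : NMatrix S V) (Γ : Set (Fm S)) (A : Fm S) : Prop :=
  ∀ v, IsVal M v → (∀ B ∈ Γ, v B ∈ M.D) → v A ∈ M.D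

def Interderiv {S : Signature} {V : Type} (M : NMatrix S V) (A B : Fm S) : Prop :=
  Entails M {A} B ∧ Entails M {B} A

def Deterministic {S : Signature} {V : Type} (M : NMatrix S V) : Prop :=
  ∀ c args, ∃ x, M.interp c args = {x}

inductive CMNum : Type where
  | r0 | ge0 | ge1 | ge2
deriving DecidableEq

inductive CMInstr (n : ℕ) (Q : Type) : Type where
  | inc : Fin n → Q → CMInstr n Q
  | dec : Fin n → Q → Q → CMInstr n Q

structure CounterMachine where
  n : ℕ
  Q : Type
  finQ : Finite Q
  qinit : Q
  δ : Q → Option (CMInstr n Q)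

inductive CMVal (C : CounterMachine) : Type where
  | num : CMNum → CMVal C
  | conf : C.Q → (Fin C.n → CMNum) → CMVal C
  | init : CMVal C
  | error : CMVal C

inductive CMConn (C : CounterMachine) : Type where
  | zero : CMConn C
  | eps : CMConn C
  | succ : CMConn C
  | step : C.Q → CMConn C

def CMSig (C : CounterMachine) : Signature where
  Conn := CMConn C
  arity := fun c => match c with
    | .zero => 0
    | .eps => 0
    | .succ => 1
    | .step _ => C.n + 1

/-- Interpretation of `succ` on abstract numbers. -/
def zeroNum : Set CMNum := {.r0, .ge0}

def succNum : CMNum → Set CMNum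
  | .r0 => {.ge1}
  | .ge0 => {.ge0, .ge1}
  | .ge1 => {.ge2}
  | .ge2 => {.ge2}

/-- Interpretation of `succ` in the Nmatrix induced by `C`. -/
def succC (C : CounterMachine) : CMVal C → Set (CMVal C)
  | .num x => CMVal.num '' succNum x
  | _ => {.error}

/-- Interpretation of `zero` in the Nmatrix induced by `C`. -/
def zeroC (C : CounterMachine) : Set (CMVal C) := {.num .r0, .num .ge0}

/-- The condition under which `step^q` applied to `x` and a tuple of numbers `zn`
produces the configuration value `conf q zn`. -/
def stepOK (C : CounterMachine) (q : C.Q) (x : CMVal C) (zn : Fin C.n → CMNum) : Prop :=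
  (x = CMVal.init ∧ q = C.qinit ∧ ((∀ i, zn i = .r0) ∨ (∀ i, zn i = .ge0))) ∨
  (∃ (q' : C.Q) (yn : Fin C.n → CMNum), x = CMVal.conf q' yn ∧
    ((∃ i, C.δ q' = some (.inc i q) ∧ zn i ∈ succNum (yn i) ∧ ∀ l, l ≠ i → zn l = yn l) ∨
     (∃ i s, C.δ q' = some (.dec i q s) ∧ yn i ∈ succNum (zn i) ∧ ∀ l, l ≠ i → zn l = yn l) ∨
     (∃ i s, C.δ q' = some (.dec i s q) ∧ yn i ∈ zeroNum ∧ zn = yn)))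

/-- Interpretation of `step^q` in the Nmatrix induced by `C`. -/
def stepC (C : CounterMachine) (q : C.Q) (x : CMVal C) (z : Fin C.n → CMVal C) :
    Set (CMVal C) :=
  { w | (∃ zn : Fin C.n → CMNum, (∀ i, z i = .num (zn i)) ∧ stepOK C q x zn ∧
          w = .conf q zn) ∨
        (¬ (∃ zn : Fin C.n → CMNum, (∀ i, z i = .num (zn i)) ∧ stepOK C q x zn) ∧
          w = .error) }

lemma succC_nonempty (C : CounterMachine) (x : CMVal C) : (succC C x).Nonempty := by
  cases x with
  | num y =>
      cases y
      · exact ⟨.num .ge1, by simp [succC, succNum]⟩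
      · exact ⟨.num .ge0, by simp [succC, succNum]⟩
      · exact ⟨.num .ge2, by simp [succC, succNum]⟩
      · exact ⟨.num .ge2, by simp [succC, succNum]⟩
  | conf q r => exact ⟨.error, rfl⟩
  | init => exact ⟨.error, rfl⟩
  | error => exact ⟨.error, rfl⟩

lemma stepC_nonempty (C : CounterMachine) (q : C.Q) (x : CMVal C)
    (z : Fin C.n → CMVal C) : (stepC C q x z).Nonempty := by
  by_cases h : ∃ zn : Fin C.n → CMNum, (∀ i, z i = .num (zn i)) ∧ stepOK C q x zn
  · obtain ⟨zn, hz, hok⟩ := h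
    exact ⟨.conf q zn, Or.inl ⟨zn, hz, hok, rfl⟩⟩
  · exact ⟨.error, Or.inr ⟨h, rfl⟩⟩

/-- The Nmatrix ℂ induced by the counter machine `C`. -/
def CMmatrix (C : CounterMachine) : NMatrix (CMSig C) (CMVal C) where
  D := { w | ∃ (q : C.Q) (r : Fin C.n → CMNum), w = CMVal.conf q r ∧ C.δ q = none }
  interp := fun c => match c with
    | .zero => fun _ => zeroC C
    | .eps => fun _ => {CMVal.init}
    | .succ => fun args => succC C (args ⟨0, Nat.one_pos⟩)
    | .step q => fun args => stepC C q (args ⟨0, Nat.succ_pos _⟩) (fun i => args i.succ)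
  interp_nonempty := by
    intro c args
    cases c with
    | zero => exact ⟨.num .r0, Or.inl rfl⟩
    | eps => exact ⟨.init, rfl⟩
    | succ => exact succC_nonempty C _
    | step q => exact stepC_nonempty C q _ _

/-- Encoding of natural numbers as closed formulas. -/
def enc (C : CounterMachine) : ℕ → Fm (CMSig C)
  | 0 => .app .zero (fun i => i.elim0)
  | a + 1 => .app .succ (fun _ => enc C a)

/-- Configurations of a counter machine. -/
def Config (C : CounterMachine) : Type := C.Q × (Fin C.n → ℕ)

/-- One step of computation: `none` when the configuration is halting. -/
def nextConf (C : CounterMachine) (cfg : Config C) : Option (Config C) :=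
  match C.δ cfg.1 with
  | none => none
  | some (.inc i q') => some (q', Function.update cfg.2 i (cfg.2 i + 1))
  | some (.dec i q' q'') =>
      if cfg.2 i = 0 then some (q'', cfg.2)
      else some (q', Function.update cfg.2 i (cfg.2 i - 1))

/-- The configuration reached after `k` steps starting from ⟨q_init, 0⃗⟩, or `none` if the
machine has already halted strictly before step `k`. -/
def steps (C : CounterMachine) : ℕ → Option (Config C)
  | 0 => some (C.qinit, fun _ => 0)
  | k + 1 => (steps C k).bind (nextConf C)

/-- A configuration is halting when the transition function is undefined on its state. -/
def Halting (C : CounterMachine) (cfg : Config C) : Prop := C.δ cfg.1 = none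

/-- Encoding of a reversed list of configurations as a formula (head = last configuration). -/
def seqRev (C : CounterMachine) : List (Config C) → Fm (CMSig C)
  | [] => .app .eps (fun i => i.elim0)
  | cfg :: rest =>
      .app (.step cfg.1) (Fin.cons (seqRev C rest) (fun i => enc C (cfg.2 i)))

/-- Encoding of a finite sequence of configurations as a formula. -/
def seqFm (C : CounterMachine) (l : List (Config C)) : Fm (CMSig C) := seqRev C l.reverse

/-- The list of configurations ⟨C₀, …, C_k⟩ of the computation of `C` from all counters zero. -/
def compList (C : CounterMachine) (k : ℕ) : List (Config C) :=
  (List.range (k + 1)).filterMap (steps C)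


namespace Stmt8

open CMVal CMNum

/-! ### Abstraction paths -/

def absN : ℕ → CMNum
  | 0 => .r0
  | 1 => .ge1
  | _ + 2 => .ge2

def cP : Option ℕ → ℕ → CMNum
  | none, h => absN h
  | some m, h => if h ≤ m then .ge0 else absN (h - m)

lemma absN_ne_ge0 : ∀ h, absN h ≠ .ge0
  | 0 => by simp [absN]
  | 1 => by simp [absN]
  | _ + 2 => by simp [absN]

lemma absN_eq_r0 : ∀ {h}, absN h = .r0 → h = 0
  | 0, _ => rfl
  | 1, h => by simp [absN] at h
  | _ + 2, h => by simp [absN] at h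

lemma absN_pos {h : ℕ} (hh : h ≠ 0) : absN h = .ge1 ∨ absN h = .ge2 := by
  match h with
  | 0 => exact absurd rfl hh
  | 1 => exact Or.inl rfl
  | _ + 2 => exact Or.inr rfl

lemma absN_eq_ge1 : ∀ {h : ℕ}, absN h = .ge1 → h = 1
  | 0, H => by simp [absN] at H
  | 1, _ => rfl
  | _ + 2, H => by simp [absN] at H

lemma absN_eq_ge2 : ∀ {h : ℕ}, absN h = .ge2 → 2 ≤ h
  | 0, H => by simp [absN] at H
  | 1, H => by simp [absN] at H
  | n + 2, _ => by omega

lemma cP_ne_ge0_of_none (h : ℕ) : cP none h ≠ .ge0 := absN_ne_ge0 h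

lemma cP_zero_mem (p : Option ℕ) : cP p 0 ∈ zeroNum := by
  cases p with
  | none => exact Or.inl rfl
  | some m => simp [cP, zeroNum]

lemma absN_succ_mem (h : ℕ) : absN (h + 1) ∈ succNum (absN h) := by
  match h with
  | 0 => simp [absN, succNum]
  | 1 => simp [absN, succNum]
  | _ + 2 => simp [absN, succNum]

lemma cP_succ_mem (p : Option ℕ) (h : ℕ) : cP p (h + 1) ∈ succNum (cP p h) := by
  cases p with
  | none => exact absN_succ_mem h
  | some m =>
      rcases le_or_gt (h + 1) m with hle | hlt
      · simp [cP, hle, Nat.le_of_succ_le hle, succNum]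
      · rcases eq_or_lt_of_le (Nat.succ_le_of_lt hlt) with heq | hlt'
        · have h1 : ¬ (h + 1 ≤ m) := by omega
          have h2 : h ≤ m := by omega
          have h3 : h + 1 - m = 1 := by omega
          simp [cP, h1, h2, h3, absN, succNum]
        · have h1 : ¬ (h + 1 ≤ m) := by omega
          have h2 : ¬ (h ≤ m) := by omega
          have h3 : h + 1 - m = (h - m) + 1 := by omega
          simp only [cP, if_neg h1, if_neg h2, h3]
          exact absN_succ_mem (h - m)

lemma r0_not_mem_succNum (r : CMNum) : CMNum.r0 ∉ succNum r := by
  cases r <;> simp [succNum]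

lemma ge0_mem_succNum {r : CMNum} (h : CMNum.ge0 ∈ succNum r) : r = .ge0 := by
  cases r <;> simp_all [succNum]

lemma cP_some_ge0 {m x : ℕ} (h : cP (some m) x = .ge0) : x ≤ m := by
  by_contra hx
  simp only [cP, if_neg (by omega : ¬ x ≤ m)] at h
  exact absN_ne_ge0 _ h

lemma force_eq {a b : ℕ} (H : ∀ p, cP p a = cP p b) : a = b := by
  by_contra hne
  rcases Nat.lt_or_ge a b with h | h
  · have := H (some a)
    simp only [cP, if_pos (le_refl a), if_neg (by omega : ¬ b ≤ a)] at this
    exact absN_ne_ge0 _ this.symm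
  · have hba : b < a := by omega
    have := H (some b)
    simp only [cP, if_pos (le_refl b), if_neg (by omega : ¬ a ≤ b)] at this
    exact absN_ne_ge0 _ this

lemma force_succ {A H : ℕ}
    (Hc : ∀ p : Option ℕ, (∀ m, p = some m → m < A) → cP p A ∈ succNum (cP p H)) :
    A = H + 1 := by
  have h0 := Hc none (by simp)
  simp only [cP] at h0
  -- A ≥ 1
  have hA1 : 1 ≤ A := by
    by_contra h
    have hA0 : A = 0 := by omega
    subst hA0
    exact r0_not_mem_succNum _ h0
  by_cases hH0 : H = 0
  · subst hH0
    have : absN A = .ge1 := by simpa [absN, succNum] using h0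
    rw [absN_eq_ge1 this]
  · -- H ≥ 1, so absN H ∈ {ge1, ge2}, succNum of it = {ge2}, so A ≥ 2
    have hA2 : 2 ≤ A := by
      rcases absN_pos hH0 with h | h <;>
      · rw [h] at h0
        simp only [succNum, Set.mem_singleton_iff] at h0
        exact absN_eq_ge2 h0
    -- use p = some (A-1): cP p A = ge1, so cP p H ∈ {r0, ge0}
    have h1 := Hc (some (A - 1)) (by intro m hm; injection hm with hm; omega)
    have hcA : cP (some (A-1)) A = .ge1 := by
      simp only [cP, if_neg (by omega : ¬ A ≤ A - 1)]
      have h4 : A - (A - 1) = 1 := by omega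
      rw [h4]; rfl
    rw [hcA] at h1
    have hH_le : H ≤ A - 1 := by
      by_contra hh
      simp only [cP, if_neg (by omega : ¬ H ≤ A - 1)] at h1
      rcases absN_pos (by omega : H - (A-1) ≠ 0) with h | h <;> rw [h] at h1 <;>
        simp [succNum] at h1
    -- if H < A - 1 contradiction via p = some H
    by_cases hHA : H = A - 1
    · omega
    · exfalso
      have hHlt : H < A - 1 := by omega
      have h2 := Hc (some H) (by intro m hm; injection hm with hm; omega)
      simp only [cP, if_pos (le_refl H), if_neg (by omega : ¬ A ≤ H)] at h2
      rcases absN_pos (by omega : A - H ≠ 0) with h | h <;> rw [h] at h2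
      · have := absN_eq_ge1 h
        omega
      · simp [succNum] at h2

end Stmt8
namespace Stmt8

variable {C : CounterMachine}

/-! ### Tower heights -/

def ht : Fm (CMSig C) → Option ℕ
  | .app .zero _ => some 0
  | .app .succ args => (ht (args ⟨0, Nat.one_pos⟩)).map (· + 1)
  | _ => none

/-- Deterministic choice inside `stepC`. -/
noncomputable def stepVal (C : CounterMachine) (q : C.Q) (x : CMVal C)
    (z : Fin C.n → CMVal C) : CMVal C := by
  classical
  exact if h : ∃ zn : Fin C.n → CMNum, (∀ i, z i = .num (zn i)) ∧ stepOK C q x zn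
    then .conf q h.choose else .error

/-- The valuation determined by the abstraction path `p`. -/
noncomputable def vP (C : CounterMachine) (p : Option ℕ) : Fm (CMSig C) → CMVal C
  | .var _ => .error
  | .app .zero _ => .num (cP p 0)
  | .app .eps _ => .init
  | .app .succ args =>
      match ht (args ⟨0, Nat.one_pos⟩) with
      | some h => .num (cP p (h + 1))
      | none => .error
  | .app (.step q) args =>
      stepVal C q (vP C p (args ⟨0, Nat.succ_pos _⟩)) (fun i => vP C p (args i.succ))

lemma stepVal_mem (q : C.Q) (x : CMVal C) (z : Fin C.n → CMVal C) :
    stepVal C q x z ∈ stepC C q x z := by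
  unfold stepVal
  split
  · next h => exact Or.inl ⟨h.choose, h.choose_spec.1, h.choose_spec.2, rfl⟩
  · next h => exact Or.inr ⟨h, rfl⟩

lemma stepVal_conf {q q' : C.Q} {x : CMVal C} {z : Fin C.n → CMVal C} {zn : Fin C.n → CMNum}
    (h : stepVal C q x z = .conf q' zn) :
    q' = q ∧ (∀ i, z i = .num (zn i)) ∧ stepOK C q x zn := by
  unfold stepVal at h
  split at h
  · next hex =>
      injection h with h1 h2
      refine ⟨h1.symm, ?_, ?_⟩
      · rw [← h2]; exact hex.choose_spec.1
      · rw [← h2]; exact hex.choose_spec.2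
  · next hex => exact absurd h (by simp)

lemma stepVal_eq {q : C.Q} {x : CMVal C} {z : Fin C.n → CMVal C} {zn : Fin C.n → CMNum}
    (h1 : ∀ i, z i = .num (zn i)) (h2 : stepOK C q x zn) :
    stepVal C q x z = .conf q zn := by
  unfold stepVal
  have hex : ∃ zn : Fin C.n → CMNum, (∀ i, z i = .num (zn i)) ∧ stepOK C q x zn := ⟨zn, h1, h2⟩
  rw [dif_pos hex]
  congr 1
  funext i
  have := hex.choose_spec.1 i
  rw [h1 i] at this
  injection this with h3
  exact h3.symm

lemma mem_stepC_eq {q : C.Q} {x : CMVal C} {z : Fin C.n → CMVal C} {zn : Fin C.n → CMNum}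
    {w : CMVal C} (hw : w ∈ stepC C q x z)
    (h1 : ∀ i, z i = .num (zn i)) (h2 : stepOK C q x zn) : w = .conf q zn := by
  rcases hw with ⟨zn', hz', _, rfl⟩ | ⟨hne, _⟩
  · have : zn' = zn := by
      funext i
      have := hz' i
      rw [h1 i] at this
      injection this with h3
      exact h3.symm
    rw [this]
  · exact absurd ⟨zn, h1, h2⟩ hne

lemma vP_ht {p : Option ℕ} {A : Fm (CMSig C)} {h : ℕ} (hh : ht A = some h) :
    vP C p A = .num (cP p h) := by
  match A with
  | .var _ => simp [ht] at hh
  | .app .zero _ =>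
      simp only [ht, Option.some.injEq] at hh
      subst hh; rfl
  | .app .eps _ => simp [ht] at hh
  | .app .succ args =>
      simp only [ht, Option.map_eq_some_iff] at hh
      obtain ⟨h0, hh0, rfl⟩ := hh
      simp only [vP, hh0]
  | .app (.step _) _ => simp [ht] at hh

lemma vP_num {p : Option ℕ} {A : Fm (CMSig C)} {r : CMNum} (hr : vP C p A = .num r) :
    ∃ h, ht A = some h := by
  match A with
  | .var _ => simp [vP] at hr
  | .app .zero _ => exact ⟨0, rfl⟩
  | .app .eps _ => simp [vP] at hr
  | .app .succ args =>
      cases hh : ht (args ⟨0, Nat.one_pos⟩) with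
      | none => rw [vP, hh] at hr; exact absurd hr (by simp)
      | some h0 =>
          refine ⟨h0 + 1, ?_⟩
          show (ht (args ⟨0, Nat.one_pos⟩)).map (· + 1) = some (h0 + 1)
          rw [hh]; rfl
  | .app (.step q) args =>
      rw [vP] at hr
      unfold stepVal at hr
      split at hr <;> simp at hr

lemma vP_init_all {p : Option ℕ} {A : Fm (CMSig C)} (hr : vP C p A = .init) :
    ∀ p', vP C p' A = .init := by
  match A with
  | .var _ => simp [vP] at hr
  | .app .zero _ => simp [vP] at hr
  | .app .eps _ => intro p'; rfl
  | .app .succ args =>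
      rw [vP] at hr
      split at hr <;> simp at hr
  | .app (.step q) args =>
      rw [vP] at hr
      unfold stepVal at hr
      split at hr <;> simp at hr

lemma vP_conf_shape {p : Option ℕ} {A : Fm (CMSig C)} {q : C.Q} {yn : Fin C.n → CMNum}
    (hr : vP C p A = .conf q yn) :
    ∀ p', vP C p' A = .error ∨ ∃ yn', vP C p' A = .conf q yn' := by
  match A with
  | .var _ => simp [vP] at hr
  | .app .zero _ => simp [vP] at hr
  | .app .eps _ => simp [vP] at hr
  | .app .succ args =>
      rw [vP] at hr
      split at hr <;> simp at hr
  | .app (.step q') args =>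
      have hq : q' = q := by
        rw [vP] at hr
        unfold stepVal at hr
        split at hr
        · exact (CMVal.conf.inj hr).1
        · simp at hr
      subst hq
      intro p'
      rw [vP]
      unfold stepVal
      split
      · exact Or.inr ⟨_, rfl⟩
      · exact Or.inl rfl

end Stmt8
namespace Stmt8

variable {C : CounterMachine}

lemma isVal_vP (p : Option ℕ) : IsVal (CMmatrix C) (vP C p) := by
  intro c args
  cases c with
  | zero =>
      show vP C p (.app .zero args) ∈ zeroC C
      have := cP_zero_mem p
      simp only [zeroNum, Set.mem_insert_iff, Set.mem_singleton_iff] at this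
      show CMVal.num (cP p 0) ∈ zeroC C
      rcases this with h | h <;> rw [h]
      · exact Or.inl rfl
      · exact Or.inr rfl
  | eps => exact rfl
  | succ =>
      show vP C p (.app .succ args) ∈ succC C (vP C p (args ⟨0, Nat.one_pos⟩))
      cases hh : ht (args ⟨0, Nat.one_pos⟩) with
      | some h =>
          rw [vP_ht hh]
          have hv : vP C p (.app .succ args) = .num (cP p (h + 1)) := by
            rw [vP, hh]
          rw [hv]
          exact ⟨cP p (h + 1), cP_succ_mem p h, rfl⟩
      | none =>
          have hv : vP C p (.app .succ args) = .error := by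
            rw [vP, hh]
          rw [hv]
          cases hx : vP C p (args ⟨0, Nat.one_pos⟩) with
          | num r =>
              obtain ⟨h', hh'⟩ := vP_num hx
              rw [hh'] at hh; exact absurd hh (by simp)
          | conf q yn => exact rfl
          | init => exact rfl
          | error => exact rfl
  | step q =>
      exact stepVal_mem q (vP C p (args ⟨0, Nat.succ_pos _⟩)) (fun i => vP C p (args i.succ))

end Stmt8
namespace Stmt8

variable {C : CounterMachine}

lemma key (A : Fm (CMSig C)) : ∀ q : C.Q,
    (∀ p, ∃ zn, vP C p A = .conf q zn) →
    ∃ (k : ℕ) (a : Fin C.n → ℕ), steps C k = some (q, a) ∧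
      ∀ p, vP C p A = .conf q (fun i => cP p (a i)) := by
  induction A with
  | var n =>
      intro q hq
      obtain ⟨zn, hzn⟩ := hq none
      exact absurd hzn (by simp [vP])
  | app c args ih =>
      intro q hq
      cases c with
      | zero =>
          obtain ⟨zn, hzn⟩ := hq none
          exact absurd hzn (by simp [vP])
      | eps =>
          obtain ⟨zn, hzn⟩ := hq none
          exact absurd hzn (by simp [vP])
      | succ =>
          obtain ⟨zn, hzn⟩ := hq none
          rw [vP] at hzn
          split at hzn <;> simp at hzn
      | step q0 =>
          have hq0 : q = q0 := by
            obtain ⟨zn, hzn⟩ := hq none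
            rw [vP] at hzn
            exact (stepVal_conf hzn).1
          subst hq0
          have hZ : ∀ p, ∃ zn, vP C p (.app (.step q) args) = .conf q zn ∧
              (∀ i, vP C p (args i.succ) = .num (zn i)) ∧
              stepOK C q (vP C p (args ⟨0, Nat.succ_pos _⟩)) zn := by
            intro p
            obtain ⟨zn, hzn⟩ := hq p
            have h2 : stepVal C q (vP C p (args ⟨0, Nat.succ_pos _⟩))
                (fun i => vP C p (args i.succ)) = .conf q zn := by
              rw [← hzn]; rw [vP]
            obtain ⟨-, hnum, hok⟩ := stepVal_conf h2
            exact ⟨zn, hzn, fun i => hnum i, hok⟩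
          choose zn heq hnum hok using hZ
          have hht : ∀ i : Fin C.n, ∃ h, ht (args i.succ) = some h :=
            fun i => vP_num (hnum none i)
          choose hgt hhgt using hht
          have hzn_cp : ∀ p i, zn p i = cP p (hgt i) := by
            intro p i
            have h1 := hnum p i
            rw [vP_ht (hhgt i)] at h1
            exact (CMVal.num.inj h1).symm
          have hfin : ∀ (k : ℕ) (a : Fin C.n → ℕ), steps C k = some (q, a) →
              (∀ i, hgt i = a i) →
              ∃ (k : ℕ) (a : Fin C.n → ℕ), steps C k = some (q, a) ∧
                ∀ p, vP C p (.app (.step q) args) = .conf q (fun i => cP p (a i)) := by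
            intro k a hk hha
            refine ⟨k, a, hk, fun p => ?_⟩
            rw [heq p]
            congr 1
            funext i
            rw [hzn_cp p i, hha i]
          rcases hok none with ⟨hxinit, hqinit, -⟩ | ⟨q', yn, hxconf, -⟩
          · -- initial clause
            have hxall : ∀ p, vP C p (args ⟨0, Nat.succ_pos _⟩) = .init := vP_init_all hxinit
            have hcl : ∀ p, (∀ i, zn p i = .r0) ∨ (∀ i, zn p i = .ge0) := by
              intro p
              rcases hok p with ⟨-, -, h⟩ | ⟨q', yn, hxc, -⟩
              · exact h
              · rw [hxall p] at hxc; exact absurd hxc (by simp)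
            have hg0 : ∀ i, hgt i = (fun _ : Fin C.n => 0) i := by
              intro i
              rcases hcl none with h | h
              · have h2 := h i; rw [hzn_cp none i] at h2
                exact absN_eq_r0 h2
              · have h2 := h i; rw [hzn_cp none i] at h2
                exact absurd h2 (absN_ne_ge0 _)
            exact hfin 0 (fun _ => 0) (by rw [hqinit]; rfl) hg0
          · -- step clause: previous value is a configuration
            have hxshape := vP_conf_shape hxconf
            have hx : ∀ p, ∃ ynp, vP C p (args ⟨0, Nat.succ_pos _⟩) = .conf q' ynp := by
              intro p
              rcases hxshape p with herr | hc
              · exfalso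
                rcases hok p with ⟨hxi, -, -⟩ | ⟨q'', yn'', hxc, -⟩
                · rw [herr] at hxi; exact absurd hxi (by simp)
                · rw [herr] at hxc; exact absurd hxc (by simp)
              · exact hc
            obtain ⟨k, a, hk, hxval⟩ := ih ⟨0, Nat.succ_pos _⟩ q' hx
            have hcl : ∀ p,
                (∃ i, C.δ q' = some (.inc i q) ∧ zn p i ∈ succNum (cP p (a i)) ∧
                   ∀ l, l ≠ i → zn p l = cP p (a l)) ∨
                (∃ i s, C.δ q' = some (.dec i q s) ∧ cP p (a i) ∈ succNum (zn p i) ∧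
                   ∀ l, l ≠ i → zn p l = cP p (a l)) ∨
                (∃ i s, C.δ q' = some (.dec i s q) ∧ cP p (a i) ∈ zeroNum ∧
                   zn p = fun i => cP p (a i)) := by
              intro p
              rcases hok p with ⟨hxi, -, -⟩ | ⟨q'', yn'', hxc, hd⟩
              · rw [hxval p] at hxi; exact absurd hxi (by simp)
              · rw [hxval p] at hxc
                obtain ⟨hq'', hyn''⟩ := CMVal.conf.inj hxc
                subst hq''
                subst hyn''
                exact hd
            cases hδ : C.δ q' with
            | none =>
                exfalso
                rcases hcl none with ⟨i, h, -⟩ | ⟨i, s, h, -⟩ | ⟨i, s, h, -⟩ <;>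
                  rw [hδ] at h <;> exact absurd h (by simp)
            | some instr =>
              cases instr with
              | inc i0 q2 =>
                  have hforced : ∀ p, zn p i0 ∈ succNum (cP p (a i0)) ∧
                      ∀ l, l ≠ i0 → zn p l = cP p (a l) := by
                    intro p
                    rcases hcl p with ⟨i, h, h1, h2⟩ | ⟨i, s, h, -⟩ | ⟨i, s, h, -⟩ <;> rw [hδ] at h
                    · obtain ⟨hi, -⟩ := CMInstr.inc.inj (Option.some.inj h)
                      subst hi
                      exact ⟨h1, h2⟩
                    · exact absurd (Option.some.inj h) (by simp)
                    · exact absurd (Option.some.inj h) (by simp)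
                  have hq2 : q2 = q := by
                    rcases hcl none with ⟨i, h, -⟩ | ⟨i, s, h, -⟩ | ⟨i, s, h, -⟩ <;> rw [hδ] at h
                    · exact (CMInstr.inc.inj (Option.some.inj h)).2
                    · exact absurd (Option.some.inj h) (by simp)
                    · exact absurd (Option.some.inj h) (by simp)
                  have hgi : hgt i0 = a i0 + 1 := by
                    apply force_succ
                    intro p _
                    rw [← hzn_cp p i0]
                    exact (hforced p).1
                  have hgl : ∀ l, l ≠ i0 → hgt l = a l := by
                    intro l hl
                    apply force_eq
                    intro p
                    rw [← hzn_cp p l]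
                    exact (hforced p).2 l hl
                  apply hfin (k + 1) (Function.update a i0 (a i0 + 1))
                  · show (steps C k).bind (nextConf C) = _
                    rw [hk]
                    show nextConf C (q', a) = _
                    simp only [nextConf, hδ, hq2]
                    rfl
                  · intro i
                    by_cases hi : i = i0
                    · subst hi; rw [Function.update_self, hgi]
                    · rw [Function.update_of_ne hi, hgl i hi]
              | dec i0 q2 q3 =>
                  have hcl' : ∀ p,
                      (q = q2 ∧ cP p (a i0) ∈ succNum (zn p i0) ∧
                         ∀ l, l ≠ i0 → zn p l = cP p (a l)) ∨
                      (q = q3 ∧ cP p (a i0) ∈ zeroNum ∧ ∀ l, zn p l = cP p (a l)) := by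
                    intro p
                    rcases hcl p with ⟨i, h, -⟩ | ⟨i, s, h, h1, h2⟩ | ⟨i, s, h, h1, h2⟩ <;>
                      rw [hδ] at h
                    · exact absurd (Option.some.inj h) (by simp)
                    · obtain ⟨hi, hqq, -⟩ := CMInstr.dec.inj (Option.some.inj h)
                      subst hi
                      exact Or.inl ⟨hqq.symm, h1, h2⟩
                    · obtain ⟨hi, -, hqq⟩ := CMInstr.dec.inj (Option.some.inj h)
                      subst hi
                      exact Or.inr ⟨hqq.symm, h1, fun l => congrFun h2 l⟩
                  have hgl : ∀ l, l ≠ i0 → hgt l = a l := by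
                    intro l hl
                    apply force_eq
                    intro p
                    rw [← hzn_cp p l]
                    rcases hcl' p with ⟨-, -, h2⟩ | ⟨-, -, h2⟩
                    · exact h2 l hl
                    · exact h2 l
                  by_cases hz0 : a i0 = 0
                  · -- the zero branch is taken
                    have hq3 : q = q3 := by
                      rcases hcl' none with ⟨-, h1, -⟩ | ⟨h, -, -⟩
                      · exfalso
                        rw [hz0] at h1
                        exact r0_not_mem_succNum _ h1
                      · exact h
                    have hgi : hgt i0 = 0 := by
                      have hge0 : cP (some 0) (hgt i0) = .ge0 := by
                        rcases hcl' (some 0) with ⟨-, h1, -⟩ | ⟨-, -, h2⟩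
                        · rw [hz0, hzn_cp (some 0) i0] at h1
                          have : cP (some 0) 0 = CMNum.ge0 := by simp [cP]
                          rw [this] at h1
                          exact ge0_mem_succNum h1
                        · have h3 := h2 i0
                          rw [hzn_cp (some 0) i0, hz0] at h3
                          rw [h3]; simp [cP]
                      have := cP_some_ge0 hge0
                      omega
                    apply hfin (k + 1) a
                    · show (steps C k).bind (nextConf C) = _
                      rw [hk]
                      show nextConf C (q', a) = _
                      simp only [nextConf, hδ, if_pos hz0, hq3]
                      rfl
                    · intro i
                      by_cases hi : i = i0
                      · subst hi; rw [hgi, hz0]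
                      · exact hgl i hi
                  · -- the nonzero branch is taken
                    have hq2 : q = q2 := by
                      rcases hcl' none with ⟨h, -, -⟩ | ⟨-, h1, -⟩
                      · exact h
                      · exfalso
                        rcases absN_pos hz0 with h | h <;>
                          · have h2 : cP none (a i0) ∈ zeroNum := h1
                            simp only [cP] at h2
                            rw [h] at h2
                            simp [zeroNum] at h2
                    have hsucc : ∀ p : Option ℕ, (∀ m, p = some m → m < a i0) →
                        cP p (a i0) ∈ succNum (cP p (hgt i0)) := by
                      intro p hp
                      rcases hcl' p with ⟨-, h1, -⟩ | ⟨-, h1, -⟩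
                      · rw [hzn_cp p i0] at h1
                        exact h1
                      · exfalso
                        cases p with
                        | none =>
                            rcases absN_pos hz0 with h | h <;>
                              · have h2 : cP none (a i0) ∈ zeroNum := h1
                                simp only [cP] at h2
                                rw [h] at h2
                                simp [zeroNum] at h2
                        | some m =>
                            have hm : m < a i0 := hp m rfl
                            simp only [zeroNum, Set.mem_insert_iff,
                              Set.mem_singleton_iff] at h1
                            rcases h1 with h1 | h1
                            · simp only [cP, if_neg (by omega : ¬ a i0 ≤ m)] at h1
                              have := absN_eq_r0 h1
                              omega
                            · have := cP_some_ge0 h1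
                              omega
                    have hgi : a i0 = hgt i0 + 1 := force_succ hsucc
                    apply hfin (k + 1) (Function.update a i0 (a i0 - 1))
                    · show (steps C k).bind (nextConf C) = _
                      rw [hk]
                      show nextConf C (q', a) = _
                      simp only [nextConf, hδ, if_neg hz0, hq2]
                      rfl
                    · intro i
                      by_cases hi : i = i0
                      · subst hi; rw [Function.update_self]; omega
                      · rw [Function.update_of_ne hi, hgl i hi]

end Stmt8
namespace Stmt8

variable {C : CounterMachine}

lemma enc_val {v : Fm (CMSig C) → CMVal C} (hv : IsVal (CMmatrix C) v) :
    ∃ f : ℕ → CMNum, (∀ a, v (enc C a) = .num (f a)) ∧ f 0 ∈ zeroNum ∧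
      ∀ a, f (a + 1) ∈ succNum (f a) := by
  have hex : ∀ a : ℕ, ∃ r, v (enc C a) = .num r := by
    intro a
    induction a with
    | zero =>
        have h0 : v (enc C 0) ∈ zeroC C := hv .zero (fun i => i.elim0)
        rcases h0 with h | h
        · exact ⟨.r0, h⟩
        · exact ⟨.ge0, h⟩
    | succ a ihv =>
        obtain ⟨r, hr⟩ := ihv
        have h2 : v (enc C (a + 1)) ∈ succC C (v (enc C a)) := hv .succ (fun _ => enc C a)
        rw [hr] at h2
        obtain ⟨r', -, hr'⟩ := h2
        exact ⟨r', hr'.symm⟩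
  choose f hf using hex
  refine ⟨f, hf, ?_, ?_⟩
  · have h0 : v (enc C 0) ∈ zeroC C := hv .zero (fun i => i.elim0)
    rw [hf 0] at h0
    rcases h0 with h | h
    · exact Or.inl (CMVal.num.inj h)
    · exact Or.inr (CMVal.num.inj h)
  · intro a
    have h2 : v (enc C (a + 1)) ∈ succC C (v (enc C a)) := hv .succ (fun _ => enc C a)
    rw [hf a, hf (a + 1)] at h2
    obtain ⟨r', hr1, hr2⟩ := h2
    rw [← CMVal.num.inj hr2]
    exact hr1

lemma forward_main {v : Fm (CMSig C) → CMVal C} (hv : IsVal (CMmatrix C) v)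
    (f : ℕ → CMNum) (hf : ∀ a, v (enc C a) = .num (f a)) (hf0 : f 0 ∈ zeroNum)
    (hfs : ∀ a, f (a + 1) ∈ succNum (f a)) :
    ∀ (j : ℕ) (cfg : Config C), steps C j = some cfg →
      v (seqFm C (compList C j)) = .conf cfg.1 (fun i => f (cfg.2 i)) := by
  intro j
  induction j with
  | zero =>
      intro cfg h
      obtain rfl : ((C.qinit, fun _ => 0) : Config C) = cfg := Option.some.inj h
      have hcomp : compList C 0 = [((C.qinit, fun _ => 0) : Config C)] := by
        show List.filterMap (steps C) (List.range 1) = _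
        rfl
      rw [hcomp]
      have hstep : v (seqFm C [((C.qinit, fun _ => 0) : Config C)]) ∈
          stepC C C.qinit (v (seqRev C [])) (fun _ => v (enc C 0)) :=
        hv (.step C.qinit) (Fin.cons (seqRev C []) (fun _ => enc C 0))
      have hinit : v (seqRev C []) = .init := hv .eps (fun i => i.elim0)
      refine mem_stepC_eq (zn := fun _ => f 0) hstep (fun _ => hf 0) ?_
      refine Or.inl ⟨hinit, rfl, ?_⟩
      rcases hf0 with h0 | h0
      · exact Or.inl (fun _ => h0)
      · exact Or.inr (fun _ => h0)
  | succ j ihj =>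
      intro cfg' h
      have hbind : (steps C j).bind (nextConf C) = some cfg' := h
      cases hs : steps C j with
      | none => rw [hs] at hbind; exact absurd hbind (by simp)
      | some cfg =>
          rw [hs] at hbind
          have hnext : nextConf C cfg = some cfg' := hbind
          have ihv := ihj cfg hs
          have hcomp : compList C (j + 1) = compList C j ++ [cfg'] := by
            show List.filterMap (steps C) (List.range (j + 1 + 1)) = _
            rw [List.range_succ, List.filterMap_append]
            congr 1
            show List.filterMap (steps C) [j + 1] = [cfg']
            simp [h]
          rw [hcomp]
          have hseq : seqFm C (compList C j ++ [cfg']) =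
              .app (.step cfg'.1)
                (Fin.cons (seqFm C (compList C j)) (fun i => enc C (cfg'.2 i))) := by
            show seqRev C (compList C j ++ [cfg']).reverse = _
            rw [show (compList C j ++ [cfg']).reverse = cfg' :: (compList C j).reverse by simp]
            rfl
          rw [hseq]
          have hstep : v (.app (.step cfg'.1)
                (Fin.cons (seqFm C (compList C j)) (fun i => enc C (cfg'.2 i)))) ∈
              stepC C cfg'.1 (v (seqFm C (compList C j))) (fun i => v (enc C (cfg'.2 i))) :=
            hv (.step cfg'.1) (Fin.cons (seqFm C (compList C j)) (fun i => enc C (cfg'.2 i)))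
          have hOK : stepOK C cfg'.1 (v (seqFm C (compList C j))) (fun i => f (cfg'.2 i)) := by
            refine Or.inr ⟨cfg.1, fun i => f (cfg.2 i), ihv, ?_⟩
            cases hδ : C.δ cfg.1 with
            | none =>
                exfalso
                simp only [nextConf, hδ] at hnext
                cases hnext
            | some instr =>
              cases instr with
              | inc i q2 =>
                  have hcfg' : cfg' = (q2, Function.update cfg.2 i (cfg.2 i + 1)) := by
                    simp only [nextConf, hδ] at hnext
                    exact (Option.some.inj hnext).symm
                  subst hcfg'
                  refine Or.inl ⟨i, ?_, ?_, ?_⟩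
                  · rfl
                  · show f (Function.update cfg.2 i (cfg.2 i + 1) i) ∈ succNum (f (cfg.2 i))
                    rw [Function.update_self]
                    exact hfs _
                  · intro l hl
                    show f (Function.update cfg.2 i (cfg.2 i + 1) l) = f (cfg.2 l)
                    rw [Function.update_of_ne hl]
              | dec i q2 q3 =>
                  by_cases hz : cfg.2 i = 0
                  · have hcfg' : cfg' = (q3, cfg.2) := by
                      simp only [nextConf, hδ, if_pos hz] at hnext
                      exact (Option.some.inj hnext).symm
                    subst hcfg'
                    refine Or.inr (Or.inr ⟨i, q2, ?_, ?_, rfl⟩)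
                    · rfl
                    show f (cfg.2 i) ∈ zeroNum
                    rw [hz]
                    exact hf0
                  · have hcfg' : cfg' = (q2, Function.update cfg.2 i (cfg.2 i - 1)) := by
                      simp only [nextConf, hδ, if_neg hz] at hnext
                      exact (Option.some.inj hnext).symm
                    subst hcfg'
                    refine Or.inr (Or.inl ⟨i, q3, ?_, ?_, ?_⟩)
                    · rfl
                    · show f (cfg.2 i) ∈
                        succNum (f (Function.update cfg.2 i (cfg.2 i - 1) i))
                      rw [Function.update_self]
                      have h5 := hfs (cfg.2 i - 1)
                      rw [show cfg.2 i - 1 + 1 = cfg.2 i by omega] at h5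
                      exact h5
                    · intro l hl
                      show f (Function.update cfg.2 i (cfg.2 i - 1) l) = f (cfg.2 l)
                      rw [Function.update_of_ne hl]
          exact mem_stepC_eq (zn := fun i => f (cfg'.2 i)) hstep (fun i => hf _) hOK

end Stmt8

theorem Stmt8.main (C : CounterMachine) :
    (∃ (k : ℕ) (cfg : Config C), steps C k = some cfg ∧ Halting C cfg) ↔
      ∃ A : Fm (CMSig C), Entails (CMmatrix C) ∅ A := by
  constructor
  · rintro ⟨k, cfg, hk, hH⟩
    refine ⟨seqFm C (compList C k), ?_⟩
    intro v hv _
    obtain ⟨f, hf, hf0, hfs⟩ := Stmt8.enc_val hv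
    rw [Stmt8.forward_main hv f hf hf0 hfs k cfg hk]
    exact ⟨cfg.1, fun i => f (cfg.2 i), rfl, hH⟩
  · rintro ⟨A, hE⟩
    have hD : ∀ p, Stmt8.vP C p A ∈ (CMmatrix C).D :=
      fun p => hE (Stmt8.vP C p) (Stmt8.isVal_vP p) (by simp)
    obtain ⟨q, r, h0, hδ0⟩ := hD none
    have hq : ∀ p, ∃ zn, Stmt8.vP C p A = .conf q zn := by
      intro p
      obtain ⟨qp, rp, hp, -⟩ := hD p
      rcases Stmt8.vP_conf_shape h0 p with herr | hc
      · rw [herr] at hp; exact absurd hp (by simp)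
      · exact hc
    obtain ⟨k, a, hk, -⟩ := Stmt8.key A q hq
    exact ⟨k, (q, a), hk, hδ0⟩

/-- A counter machine C halts from all counters zero if and only if the logic of
the induced Nmatrix ℂ has some theorem. -/
theorem stmt_8 (C : CounterMachine) :
    (∃ (k : ℕ) (cfg : Config C), steps C k = some cfg ∧ Halting C cfg) ↔
      ∃ A : Fm (CMSig C), Entails (CMmatrix C) ∅ A :=
  Stmt8.main C
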